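/- Fix d ∈ ℕ, h ∈ ℝ, and let κ(x,v) = (x,−v) on ℝ^d × ℝ^d. Let ξ : ℝ^d → ℝ^d be a Borel-measurable vector field, and let φ_h = Φ_circle ∘ Φ_bounce ∘ Φ_circle be the Weave transform. Then |φ_h(z)| = |z| for all z ∈ ℝ^{2d} and, for every g > 0, φ_h is (μ_g⊗μ_g, κ)-reversible, where μ_g = 𝒩_d(0, g⁻¹I_d); moreover φ_h is (Leb,κ)-reversible for Lebesgue measure on ℝ^{2d}. -/

import Mathlib

open MeasureTheory
open scoped ENNReal RealInnerProductSpace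

/-- A transform `Φ` is `μ`-reversible if `μ(A ∩ Φ⁻¹(B)) = μ(B ∩ Φ⁻¹(A))` for all
measurable `A`, `B`. -/
def MeasRev {E : Type*} [MeasurableSpace E] (μ : Measure E) (Φ : E → E) : Prop :=
  ∀ A B : Set E, MeasurableSet A → MeasurableSet B → μ (A ∩ Φ ⁻¹' B) = μ (B ∩ Φ ⁻¹' A)

/-- A transform `Φ` is `(μ,κ)`-reversible if `κ ∘ Φ` is `μ`-reversible. -/
def FlipRev {E : Type*} [MeasurableSpace E] (μ : Measure E) (κ Φ : E → E) : Prop :=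
  MeasRev μ (κ ∘ Φ)

/-- The flip `κ(x,v) = (x,-v)` on `ℝ^d × ℝ^d`. -/
def flipT (d : ℕ) (z : EuclideanSpace ℝ (Fin d) × EuclideanSpace ℝ (Fin d)) :
    EuclideanSpace ℝ (Fin d) × EuclideanSpace ℝ (Fin d) :=
  (z.1, -z.2)

/-- The circle transform with angle `h` on `ℝ^d × ℝ^d`. -/
noncomputable def circleT (d : ℕ) (h : ℝ)
    (z : EuclideanSpace ℝ (Fin d) × EuclideanSpace ℝ (Fin d)) :
    EuclideanSpace ℝ (Fin d) × EuclideanSpace ℝ (Fin d) :=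
  (Real.cos h • z.1 + Real.sin h • z.2, -(Real.sin h) • z.1 + Real.cos h • z.2)

/-- The normalized vector field `ξ̄(x) = ξ(x)/|ξ(x)|` (junk value `0` on `𝒩 = {ξ = 0}`). -/
noncomputable def xibar (d : ℕ) (ξ : EuclideanSpace ℝ (Fin d) → EuclideanSpace ℝ (Fin d))
    (x : EuclideanSpace ℝ (Fin d)) : EuclideanSpace ℝ (Fin d) :=
  ‖ξ x‖⁻¹ • ξ x

open Classical in
/-- The reflection `R(x)v = v − 2(ξ̄(x)ᵀv)ξ̄(x)` for `x ∉ 𝒩`, and `R(x)v = −v` for `x ∈ 𝒩`. -/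
noncomputable def reflT (d : ℕ) (ξ : EuclideanSpace ℝ (Fin d) → EuclideanSpace ℝ (Fin d))
    (x v : EuclideanSpace ℝ (Fin d)) : EuclideanSpace ℝ (Fin d) :=
  if ξ x = 0 then -v else v - (2 * ⟪xibar d ξ x, v⟫) • xibar d ξ x

/-- The bounce transform `Φ_bounce(x,v) = (x, R(x)v)`. -/
noncomputable def bounceT (d : ℕ) (ξ : EuclideanSpace ℝ (Fin d) → EuclideanSpace ℝ (Fin d))
    (z : EuclideanSpace ℝ (Fin d) × EuclideanSpace ℝ (Fin d)) :
    EuclideanSpace ℝ (Fin d) × EuclideanSpace ℝ (Fin d) :=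
  (z.1, reflT d ξ z.1 z.2)

/-- The centered Gaussian measure `𝒩_d(0, σ²·I_d)` on `ℝ^d`, realized as the `d`-fold
product of the one-dimensional Gaussian with mean `0` and variance `σ²`. -/
noncomputable def gaussd (d : ℕ) (v : NNReal) : Measure (EuclideanSpace ℝ (Fin d)) :=
  Measure.map (MeasurableEquiv.toLp 2 (Fin d → ℝ))
    (Measure.pi fun _ : Fin d => ProbabilityTheory.gaussianReal 0 v)

open scoped NNReal

section AuxLemmas

section MeasAux

variable {α β : Type*} [MeasurableSpace α] [MeasurableSpace β]

lemma map_withDensity_equiv (e : α ≃ᵐ β) (μ : Measure α) (f : β → ℝ≥0∞) :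
    Measure.map e (μ.withDensity (f ∘ e)) = (Measure.map e μ).withDensity f := by
  ext s hs
  rw [Measure.map_apply e.measurable hs, withDensity_apply _ hs,
    withDensity_apply _ (e.measurable hs), Measure.restrict_map e.measurable hs,
    MeasureTheory.lintegral_map_equiv f e]
  rfl

lemma map_symm_withDensity (e : α ≃ᵐ β) (μ : Measure α) (G : β → ℝ≥0∞) :
    Measure.map e.symm ((Measure.map e μ).withDensity G) = μ.withDensity (G ∘ e) := by
  rw [← map_withDensity_equiv e μ G, Measure.map_map e.symm.measurable e.measurable]
  simp

lemma prod_withDensity (μ : Measure α) (ν : Measure β) [SigmaFinite μ] [SigmaFinite ν]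
    {f : α → ℝ≥0∞} {g : β → ℝ≥0∞} (hf : Measurable f) (hg : Measurable g)
    [SigmaFinite (μ.withDensity f)] [SigmaFinite (ν.withDensity g)] :
    (μ.withDensity f).prod (ν.withDensity g)
      = (μ.prod ν).withDensity fun p => f p.1 * g p.2 := by
  refine Measure.prod_eq (μ := μ.withDensity f) (ν := ν.withDensity g) fun s t hs ht => ?_
  rw [withDensity_apply _ (hs.prod ht), ← Measure.prod_restrict,
    lintegral_prod_mul hf.aemeasurable hg.aemeasurable,
    withDensity_apply _ hs, withDensity_apply _ ht]

end MeasAux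

section PiGauss
open ProbabilityTheory

lemma pi_gauss_eq {v : ℝ≥0} (hv : v ≠ 0) (n : ℕ) :
    Measure.pi (fun _ : Fin n => gaussianReal 0 v)
      = (Measure.pi fun _ : Fin n => (volume : Measure ℝ)).withDensity
          (fun y => ∏ i, gaussianPDF 0 v (y i)) := by
  induction n with
  | zero =>
      simp only [Finset.univ_eq_empty, Finset.prod_empty]
      rw [show (fun _ : (Fin 0 → ℝ) => (1:ℝ≥0∞)) = 1 from rfl, withDensity_one,
        Measure.pi_of_empty, Measure.pi_of_empty]
  | succ n ih =>
      set e := MeasurableEquiv.piFinSuccAbove (fun _ : Fin (n+1) => ℝ) 0 with he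
      have h1 := measurePreserving_piFinSuccAbove (fun _ : Fin (n+1) => gaussianReal 0 v) 0
      have h2 := measurePreserving_piFinSuccAbove (fun _ : Fin (n+1) => (volume : Measure ℝ)) 0
      haveI : SigmaFinite ((volume : Measure ℝ).withDensity (gaussianPDF 0 v)) := by
        rw [← gaussianReal_of_var_ne_zero 0 hv]; infer_instance
      haveI : SigmaFinite ((Measure.pi fun _ : Fin n => (volume : Measure ℝ)).withDensity
          fun y => ∏ i, gaussianPDF 0 v (y i)) := by rw [← ih]; infer_instance
      have key : (gaussianReal 0 v).prod (Measure.pi fun _ : Fin n => gaussianReal 0 v)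
          = ((volume : Measure ℝ).prod
              (Measure.pi fun _ : Fin n => (volume : Measure ℝ))).withDensity
              (fun p => gaussianPDF 0 v p.1 * ∏ i, gaussianPDF 0 v (p.2 i)) := by
        conv_lhs => rw [ih, gaussianReal_of_var_ne_zero 0 hv]
        exact prod_withDensity _ _ ((measurable_gaussianPDFReal 0 v).ennreal_ofReal)
          (Finset.measurable_prod _ fun i _ =>
            ((measurable_gaussianPDFReal 0 v).ennreal_ofReal).comp (measurable_pi_apply i))
      calc Measure.pi (fun _ : Fin (n+1) => gaussianReal 0 v)
          = Measure.map e.symm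
              ((gaussianReal 0 v).prod (Measure.pi fun _ : Fin n => gaussianReal 0 v)) :=
            ((MeasurePreserving.symm e h1).map_eq).symm
        _ = Measure.map e.symm ((Measure.map e
              (Measure.pi fun _ : Fin (n+1) => (volume : Measure ℝ))).withDensity
              (fun p => gaussianPDF 0 v p.1 * ∏ i, gaussianPDF 0 v (p.2 i))) := by
            rw [key, h2.map_eq]
        _ = (Measure.pi fun _ : Fin (n+1) => (volume : Measure ℝ)).withDensity
              ((fun p : ℝ × (Fin n → ℝ) =>
                gaussianPDF 0 v p.1 * ∏ i, gaussianPDF 0 v (p.2 i)) ∘ e) :=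
            map_symm_withDensity e _ _
        _ = (Measure.pi fun _ : Fin (n+1) => (volume : Measure ℝ)).withDensity
              (fun y => ∏ i, gaussianPDF 0 v (y i)) := by
            congr 1
            funext y
            have hey : e y = (y 0, fun i => y (Fin.succAbove 0 i)) := rfl
            simp only [Function.comp_apply, hey]
            exact (Fin.prod_univ_succAbove (fun i => gaussianPDF 0 v (y i)) 0).symm

end PiGauss
section Gaussd
open ProbabilityTheory

/-- density of the `d`-dimensional Gaussian -/
noncomputable def rhod (d : ℕ) (v : ℝ≥0) (x : EuclideanSpace ℝ (Fin d)) : ℝ≥0∞ :=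
  ENNReal.ofReal ((Real.sqrt (2 * Real.pi * v))⁻¹ ^ d * Real.exp (-‖x‖ ^ 2 / (2 * v)))

lemma norm_sq_eq_sum {d : ℕ} (x : EuclideanSpace ℝ (Fin d)) :
    ‖x‖ ^ 2 = ∑ i, (x i) ^ 2 := by
  rw [EuclideanSpace.norm_eq, Real.sq_sqrt]
  · simp [Real.norm_eq_abs, sq_abs]
  · positivity

lemma prod_gaussianPDF {d : ℕ} (v : ℝ≥0) (x : EuclideanSpace ℝ (Fin d)) :
    ∏ i, gaussianPDF 0 v (x i) = rhod d v x := by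
  simp only [gaussianPDF, rhod]
  rw [← ENNReal.ofReal_prod_of_nonneg (fun i _ => gaussianPDFReal_nonneg 0 v (x i))]
  congr 1
  simp only [gaussianPDFReal, sub_zero]
  rw [Finset.prod_mul_distrib, Finset.prod_const, Finset.card_univ, Fintype.card_fin,
    ← Real.exp_sum]
  congr 1
  rw [norm_sq_eq_sum]
  congr 1
  rw [← Finset.sum_div, Finset.sum_neg_distrib]

lemma gaussd_eq {v : ℝ≥0} (hv : v ≠ 0) (d : ℕ) :
    gaussd d v = (volume : Measure (EuclideanSpace ℝ (Fin d))).withDensity (rhod d v) := by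
  set e := (MeasurableEquiv.toLp 2 (Fin d → ℝ)).symm with he
  calc gaussd d v
      = Measure.map e.symm ((Measure.pi fun _ : Fin d => (volume : Measure ℝ)).withDensity
          (fun y => ∏ i, gaussianPDF 0 v (y i))) := by rw [gaussd, pi_gauss_eq hv d, he, MeasurableEquiv.symm_symm]
    _ = Measure.map e.symm ((Measure.map e volume).withDensity
          (fun y => ∏ i, gaussianPDF 0 v (y i))) := by
        rw [(EuclideanSpace.volume_preserving_symm_measurableEquiv_toLp (ι := Fin d)).map_eq, volume_pi]
    _ = volume.withDensity ((fun y : Fin d → ℝ => ∏ i, gaussianPDF 0 v (y i)) ∘ e) :=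
        map_symm_withDensity e _ _
    _ = volume.withDensity (rhod d v) := by
        congr 1
        funext x
        exact prod_gaussianPDF v x

lemma gaussd_prob (d : ℕ) (v : ℝ≥0) : IsProbabilityMeasure (gaussd d v) := by
  unfold gaussd
  exact Measure.isProbabilityMeasure_map (MeasurableEquiv.measurable _).aemeasurable

lemma rhod_meas (d : ℕ) (v : ℝ≥0) : Measurable (rhod d v) := by
  unfold rhod
  exact (((continuous_const.mul (((continuous_norm.pow 2).neg.div_const
    _).rexp))).measurable).ennreal_ofReal

lemma gauss2_eq {v : ℝ≥0} (hv : v ≠ 0) (d : ℕ) :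
    (gaussd d v).prod (gaussd d v)
      = ((volume : Measure (EuclideanSpace ℝ (Fin d))).prod volume).withDensity
          (fun z => ENNReal.ofReal (((Real.sqrt (2 * Real.pi * v))⁻¹ ^ d) ^ 2
            * Real.exp (-(‖z.1‖ ^ 2 + ‖z.2‖ ^ 2) / (2 * v)))) := by
  haveI : SigmaFinite ((volume : Measure (EuclideanSpace ℝ (Fin d))).withDensity (rhod d v)) := by
    rw [← gaussd_eq hv]
    haveI := gaussd_prob d v
    infer_instance
  rw [gaussd_eq hv, prod_withDensity _ _ (rhod_meas d v) (rhod_meas d v)]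
  congr 1
  funext z
  unfold rhod
  rw [← ENNReal.ofReal_mul (by positivity)]
  congr 1
  rw [show -(‖z.1‖ ^ 2 + ‖z.2‖ ^ 2) / (2 * (v:ℝ)) = -‖z.1‖ ^ 2 / (2 * v) + -‖z.2‖ ^ 2 / (2 * v)
    by ring, Real.exp_add]
  ring
section Dyn

variable {d : ℕ} {ξ : EuclideanSpace ℝ (Fin d) → EuclideanSpace ℝ (Fin d)} {h : ℝ}

/-! ### The reflection as a linear isometry -/

noncomputable def reflLin (u : EuclideanSpace ℝ (Fin d)) :
    EuclideanSpace ℝ (Fin d) →ₗ[ℝ] EuclideanSpace ℝ (Fin d) where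
  toFun v := v - (2 * ⟪u, v⟫) • u
  map_add' a b := by
    simp only [inner_add_right, mul_add, add_smul]
    abel
  map_smul' c a := by
    simp only [inner_smul_right, RingHom.id_apply, smul_sub, smul_smul, mul_left_comm]

lemma reflLin_invol (u : EuclideanSpace ℝ (Fin d)) (hu : ‖u‖ = 1) :
    Function.Involutive (reflLin u) := by
  intro v
  have huu : ⟪u, u⟫ = 1 := by rw [real_inner_self_eq_norm_sq, hu]; norm_num
  simp only [reflLin, LinearMap.coe_mk, AddHom.coe_mk, inner_sub_right, inner_smul_right, huu]
  module

noncomputable def reflLIE (u : EuclideanSpace ℝ (Fin d)) (hu : ‖u‖ = 1) :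
    EuclideanSpace ℝ (Fin d) ≃ₗᵢ[ℝ] EuclideanSpace ℝ (Fin d) where
  toLinearEquiv := LinearEquiv.ofInvolutive (reflLin u) (reflLin_invol u hu)
  norm_map' v := by
    have h2 : ‖v - (2 * ⟪u, v⟫) • u‖ ^ 2 = ‖v‖ ^ 2 := by
      rw [@norm_sub_sq_real, real_inner_smul_right, norm_smul, real_inner_comm v u]
      simp only [hu, mul_one, Real.norm_eq_abs, mul_pow, sq_abs]
      ring
    show ‖v - (2 * ⟪u, v⟫) • u‖ = ‖v‖
    rw [← Real.sqrt_sq (norm_nonneg (v - (2 * ⟪u, v⟫) • u)), h2,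
      Real.sqrt_sq (norm_nonneg v)]

lemma reflLIE_apply (u : EuclideanSpace ℝ (Fin d)) (hu : ‖u‖ = 1)
    (v : EuclideanSpace ℝ (Fin d)) : reflLIE u hu v = v - (2 * ⟪u, v⟫) • u := rfl

lemma xibar_norm (x : EuclideanSpace ℝ (Fin d)) (hx : ξ x ≠ 0) : ‖xibar d ξ x‖ = 1 := by
  rw [xibar, norm_smul, norm_inv, norm_norm, inv_mul_cancel₀ (norm_ne_zero_iff.2 hx)]

lemma reflT_eq_neg (x : EuclideanSpace ℝ (Fin d)) (hx : ξ x = 0) :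
    reflT d ξ x = fun v => -v := by
  funext v; simp [reflT, hx]

lemma reflT_eq_LIE (x : EuclideanSpace ℝ (Fin d)) (hx : ξ x ≠ 0) :
    reflT d ξ x = ⇑(reflLIE (xibar d ξ x) (xibar_norm x hx)) := by
  funext v; simp [reflT, hx, reflLIE_apply]

lemma reflT_norm (x v : EuclideanSpace ℝ (Fin d)) : ‖reflT d ξ x v‖ = ‖v‖ := by
  by_cases hx : ξ x = 0
  · rw [reflT_eq_neg x hx]; exact norm_neg v
  · rw [reflT_eq_LIE x hx]; exact (reflLIE _ _).norm_map v

lemma reflT_invol (x : EuclideanSpace ℝ (Fin d)) (v : EuclideanSpace ℝ (Fin d)) :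
    reflT d ξ x (reflT d ξ x v) = v := by
  by_cases hx : ξ x = 0
  · rw [reflT_eq_neg x hx]; exact neg_neg v
  · rw [reflT_eq_LIE x hx]
    exact reflLin_invol (xibar d ξ x) (xibar_norm x hx) v

lemma reflT_neg (x v : EuclideanSpace ℝ (Fin d)) :
    reflT d ξ x (-v) = -reflT d ξ x v := by
  by_cases hx : ξ x = 0
  · rw [reflT_eq_neg x hx]
  · rw [reflT_eq_LIE x hx]; exact map_neg _ v

lemma reflT_map_vol (x : EuclideanSpace ℝ (Fin d)) :
    Measure.map (reflT d ξ x) volume = volume := by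
  by_cases hx : ξ x = 0
  · rw [reflT_eq_neg x hx]
    exact (Measure.measurePreserving_neg _).map_eq
  · rw [reflT_eq_LIE x hx]
    exact (reflLIE _ _).measurePreserving.map_eq

lemma reflT_meas (hξ : Measurable ξ) :
    Measurable (Function.uncurry (reflT d ξ)) := by
  have hxb : Measurable (xibar d ξ) := (hξ.norm.inv).smul hξ
  have hcond : MeasurableSet {p : EuclideanSpace ℝ (Fin d) × EuclideanSpace ℝ (Fin d) |
      ξ p.1 = 0} := (hξ.comp measurable_fst) (measurableSet_singleton 0)
  unfold Function.uncurry reflT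
  exact Measurable.ite hcond measurable_snd.neg
    (measurable_snd.sub ((((hxb.comp measurable_fst).inner (𝕜 := ℝ) measurable_snd).const_mul
      (2 : ℝ)).smul (hxb.comp measurable_fst)))

end Dyn

section Dyn2

variable {d : ℕ} {ξ : EuclideanSpace ℝ (Fin d) → EuclideanSpace ℝ (Fin d)} {h : ℝ}

/-! ### Algebraic identities -/

lemma circle_s (z : EuclideanSpace ℝ (Fin d) × EuclideanSpace ℝ (Fin d)) :
    ‖(circleT d h z).1‖ ^ 2 + ‖(circleT d h z).2‖ ^ 2 = ‖z.1‖ ^ 2 + ‖z.2‖ ^ 2 := by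
  obtain ⟨x, v⟩ := z
  simp only [circleT]
  rw [@norm_add_sq_real, @norm_add_sq_real]
  simp only [norm_smul, real_inner_smul_left, real_inner_smul_right, Real.norm_eq_abs,
    mul_pow, sq_abs, neg_smul, norm_neg, inner_neg_left]
  linear_combination (‖x‖ ^ 2 + ‖v‖ ^ 2) * Real.sin_sq_add_cos_sq h

lemma bounce_s (z : EuclideanSpace ℝ (Fin d) × EuclideanSpace ℝ (Fin d)) :
    ‖(bounceT d ξ z).1‖ ^ 2 + ‖(bounceT d ξ z).2‖ ^ 2 = ‖z.1‖ ^ 2 + ‖z.2‖ ^ 2 := by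
  simp only [bounceT, reflT_norm]

lemma circle_inv (z : EuclideanSpace ℝ (Fin d) × EuclideanSpace ℝ (Fin d)) :
    circleT d (-h) (circleT d h z) = z := by
  obtain ⟨x, v⟩ := z
  have hsc := Real.sin_sq_add_cos_sq h
  simp only [circleT, Real.cos_neg, Real.sin_neg, neg_neg]
  refine Prod.ext ?_ ?_ <;> simp only []
  · rw [show x = (Real.sin h ^ 2 + Real.cos h ^ 2) • x by rw [hsc, one_smul]]
    match_scalars <;> nlinarith [hsc]
  · rw [show v = (Real.sin h ^ 2 + Real.cos h ^ 2) • v by rw [hsc, one_smul]]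
    match_scalars <;> nlinarith [hsc]

lemma flip_circle (z : EuclideanSpace ℝ (Fin d) × EuclideanSpace ℝ (Fin d)) :
    flipT d (circleT d h z) = circleT d (-h) (flipT d z) := by
  obtain ⟨x, v⟩ := z
  simp only [flipT, circleT, Real.cos_neg, Real.sin_neg, neg_neg]
  refine Prod.ext ?_ ?_ <;> simp only [] <;> module

lemma flip_bounce (z : EuclideanSpace ℝ (Fin d) × EuclideanSpace ℝ (Fin d)) :
    flipT d (bounceT d ξ z) = bounceT d ξ (flipT d z) := by
  obtain ⟨x, v⟩ := z
  simp only [flipT, bounceT, reflT_neg]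

lemma flip_circle' (z : EuclideanSpace ℝ (Fin d) × EuclideanSpace ℝ (Fin d)) :
    circleT d h (flipT d z) = flipT d (circleT d (-h) z) := by
  rw [flip_circle (h := -h), neg_neg]

lemma bounce_invol (z : EuclideanSpace ℝ (Fin d) × EuclideanSpace ℝ (Fin d)) :
    bounceT d ξ (bounceT d ξ z) = z := by
  simp only [bounceT, reflT_invol]

lemma flip_invol (z : EuclideanSpace ℝ (Fin d) × EuclideanSpace ℝ (Fin d)) :
    flipT d (flipT d z) = z := by
  simp [flipT]

lemma T_invol (z : EuclideanSpace ℝ (Fin d) × EuclideanSpace ℝ (Fin d)) :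
    (flipT d ∘ circleT d h ∘ bounceT d ξ ∘ circleT d h)
      ((flipT d ∘ circleT d h ∘ bounceT d ξ ∘ circleT d h) z) = z := by
  simp only [Function.comp_apply]
  set w := circleT d h (bounceT d ξ (circleT d h z)) with hw
  rw [flip_circle', ← flip_bounce, flip_circle', flip_invol, hw, circle_inv,
    bounce_invol, circle_inv]

end Dyn2

section MP

variable {d : ℕ} {ξ : EuclideanSpace ℝ (Fin d) → EuclideanSpace ℝ (Fin d)} {h : ℝ}

lemma shear2_mp (a : ℝ) :
    MeasurePreserving (fun z : EuclideanSpace ℝ (Fin d) × EuclideanSpace ℝ (Fin d) =>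
        (z.1, z.2 + a • z.1))
      ((volume : Measure (EuclideanSpace ℝ (Fin d))).prod volume)
      ((volume : Measure (EuclideanSpace ℝ (Fin d))).prod volume) := by
  have hm : Measurable (Function.uncurry fun (x v : EuclideanSpace ℝ (Fin d)) => v + a • x) :=
    measurable_snd.add (measurable_fst.const_smul a)
  exact (MeasurePreserving.id volume).skew_product hm
    (Filter.Eventually.of_forall fun x => (measurePreserving_add_right volume (a • x)).map_eq)

lemma shear1_mp (a : ℝ) :
    MeasurePreserving (fun z : EuclideanSpace ℝ (Fin d) × EuclideanSpace ℝ (Fin d) =>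
        (z.1 + a • z.2, z.2))
      ((volume : Measure (EuclideanSpace ℝ (Fin d))).prod volume)
      ((volume : Measure (EuclideanSpace ℝ (Fin d))).prod volume) := by
  have heq : (fun z : EuclideanSpace ℝ (Fin d) × EuclideanSpace ℝ (Fin d) =>
        (z.1 + a • z.2, z.2))
      = Prod.swap ∘ (fun z : EuclideanSpace ℝ (Fin d) × EuclideanSpace ℝ (Fin d) =>
        (z.1, z.2 + a • z.1)) ∘ Prod.swap := rfl
  rw [heq]
  exact Measure.measurePreserving_swap.comp ((shear2_mp a).comp Measure.measurePreserving_swap)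

lemma circle_mp : MeasurePreserving (circleT d h)
    ((volume : Measure (EuclideanSpace ℝ (Fin d))).prod volume)
    ((volume : Measure (EuclideanSpace ℝ (Fin d))).prod volume) := by
  rcases eq_or_ne (Real.sin h) 0 with hs | hs
  · have hsq := Real.sin_sq_add_cos_sq h
    rw [hs] at hsq
    have hc : Real.cos h = 1 ∨ Real.cos h = -1 := by
      rcases mul_eq_zero.mp (show (Real.cos h - 1) * (Real.cos h + 1) = 0 by nlinarith) with h'|h'
      · exact Or.inl (by linarith)
      · exact Or.inr (by linarith)
    rcases hc with hc1 | hc1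
    · have heq : circleT d h = id := by
        funext z; simp [circleT, hs, hc1]
      rw [heq]; exact MeasurePreserving.id _
    · have heq : circleT d h = fun z : EuclideanSpace ℝ (Fin d) × EuclideanSpace ℝ (Fin d) =>
          (-z.1, -z.2) := by
        funext z; simp [circleT, hs, hc1]
      rw [heq]
      exact (Measure.measurePreserving_neg volume).prod (Measure.measurePreserving_neg volume)
  · obtain ⟨b, hb1, hb2⟩ : ∃ b : ℝ, 1 + b * (-Real.sin h) = Real.cos h
        ∧ b * (2 + b * (-Real.sin h)) = Real.sin h := by
      have hp := Real.sin_sq_add_cos_sq h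
      refine ⟨(1 - Real.cos h) / Real.sin h, ?_, ?_⟩
      · field_simp
        ring
      · rw [show (2 + (1 - Real.cos h) / Real.sin h * (-Real.sin h)) = 1 + Real.cos h by
          field_simp; ring, div_mul_eq_mul_div, div_eq_iff hs]
        nlinarith [hp]
    have hdec : circleT d h = (fun z : EuclideanSpace ℝ (Fin d) × EuclideanSpace ℝ (Fin d) =>
          (z.1 + b • z.2, z.2))
        ∘ (fun z : EuclideanSpace ℝ (Fin d) × EuclideanSpace ℝ (Fin d) =>
          (z.1, z.2 + (-Real.sin h) • z.1))
        ∘ (fun z : EuclideanSpace ℝ (Fin d) × EuclideanSpace ℝ (Fin d) =>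
          (z.1 + b • z.2, z.2)) := by
      funext z
      simp only [Function.comp_apply, circleT]
      refine Prod.ext ?_ ?_ <;> simp only [] <;> match_scalars <;>
        first
          | ring1
          | linear_combination hb1
          | linear_combination -hb1
          | linear_combination hb2
          | linear_combination -hb2
    rw [hdec]
    exact (shear1_mp b).comp ((shear2_mp _).comp (shear1_mp b))

lemma flip_mp : MeasurePreserving (flipT d)
    ((volume : Measure (EuclideanSpace ℝ (Fin d))).prod volume)
    ((volume : Measure (EuclideanSpace ℝ (Fin d))).prod volume) := by
  have heq : flipT d = Prod.map (id : EuclideanSpace ℝ (Fin d) → EuclideanSpace ℝ (Fin d))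
      (Neg.neg : EuclideanSpace ℝ (Fin d) → EuclideanSpace ℝ (Fin d)) := rfl
  rw [heq]
  exact (MeasurePreserving.id volume).prod (Measure.measurePreserving_neg volume)

lemma bounce_mp (hξ : Measurable ξ) : MeasurePreserving (bounceT d ξ)
    ((volume : Measure (EuclideanSpace ℝ (Fin d))).prod volume)
    ((volume : Measure (EuclideanSpace ℝ (Fin d))).prod volume) := by
  have heq : bounceT d ξ = fun p : EuclideanSpace ℝ (Fin d) × EuclideanSpace ℝ (Fin d) =>
      (id p.1, reflT d ξ p.1 p.2) := rfl
  rw [heq]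
  exact (MeasurePreserving.id volume).skew_product (reflT_meas hξ)
    (Filter.Eventually.of_forall fun x => reflT_map_vol x)

end MP

lemma rev_of_invol {α : Type*} [MeasurableSpace α] {μ : Measure α} {T : α → α}
    (hT : Measurable T) (hi : ∀ z, T (T z) = z) (hp : Measure.map T μ = μ) :
    ∀ A B : Set α, MeasurableSet A → MeasurableSet B → μ (A ∩ T ⁻¹' B) = μ (B ∩ T ⁻¹' A) := by
  intro A B hA hB
  have hpre : A ∩ T ⁻¹' B = T ⁻¹' (B ∩ T ⁻¹' A) := by
    ext z
    simp only [Set.mem_inter_iff, Set.mem_preimage, hi z]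
    tauto
  rw [hpre, ← Measure.map_apply hT (hB.inter (hA.preimage hT)), hp]


/-- The Weave transform `φ_h = Φ_circle ∘ Φ_bounce ∘ Φ_circle` preserves the Euclidean
norm of `z = (x,v)` and is `(μ_g⊗μ_g,κ)`-reversible for `μ_g = 𝒩_d(0, g⁻¹I_d)` for every
`g > 0`, as well as `(Leb,κ)`-reversible. -/
theorem stmt_11 (d : ℕ) (h : ℝ)
    (ξ : EuclideanSpace ℝ (Fin d) → EuclideanSpace ℝ (Fin d)) (hξ_meas : Measurable ξ) :
    -- the Weave transform
    let φ := circleT d h ∘ bounceT d ξ ∘ circleT d h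
    -- norm preservation: `|φ_h(z)| = |z|`
    (∀ z : EuclideanSpace ℝ (Fin d) × EuclideanSpace ℝ (Fin d),
      ‖(φ z).1‖ ^ 2 + ‖(φ z).2‖ ^ 2 = ‖z.1‖ ^ 2 + ‖z.2‖ ^ 2) ∧
    -- `(μ_g ⊗ μ_g, κ)`-reversibility for every `g > 0`
    (∀ g : NNReal, 0 < g →
      FlipRev ((gaussd d g⁻¹).prod (gaussd d g⁻¹)) (flipT d) φ) ∧
    -- `(Leb, κ)`-reversibility
    FlipRev (volume : Measure (EuclideanSpace ℝ (Fin d) × EuclideanSpace ℝ (Fin d)))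
      (flipT d) φ := by
  intro φ
  have hφ : φ = circleT d h ∘ bounceT d ξ ∘ circleT d h := rfl
  -- measurability
  have hCmeas : Measurable (circleT d h) := by
    unfold circleT
    exact ((measurable_fst.const_smul (Real.cos h)).add (measurable_snd.const_smul (Real.sin h))).prodMk
      ((measurable_fst.const_smul (-(Real.sin h))).add (measurable_snd.const_smul (Real.cos h)))
  have hBmeas : Measurable (bounceT d ξ) :=
    measurable_fst.prodMk (reflT_meas hξ_meas)
  have hFmeas : Measurable (flipT d) := measurable_fst.prodMk measurable_snd.neg
  have hTmeas : Measurable (flipT d ∘ φ) :=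
    hFmeas.comp (hCmeas.comp (hBmeas.comp hCmeas))
  have hTinvol : ∀ z, (flipT d ∘ φ) ((flipT d ∘ φ) z) = z := T_invol
  have hTmp : MeasurePreserving (flipT d ∘ φ)
      ((volume : Measure (EuclideanSpace ℝ (Fin d))).prod volume)
      ((volume : Measure (EuclideanSpace ℝ (Fin d))).prod volume) :=
    flip_mp.comp (circle_mp.comp ((bounce_mp hξ_meas).comp circle_mp))
  have hnorm : ∀ z : EuclideanSpace ℝ (Fin d) × EuclideanSpace ℝ (Fin d),
      ‖(φ z).1‖ ^ 2 + ‖(φ z).2‖ ^ 2 = ‖z.1‖ ^ 2 + ‖z.2‖ ^ 2 := by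
    intro z
    show ‖(circleT d h (bounceT d ξ (circleT d h z))).1‖ ^ 2
      + ‖(circleT d h (bounceT d ξ (circleT d h z))).2‖ ^ 2 = _
    rw [circle_s, bounce_s, circle_s]
  have hsT : ∀ z : EuclideanSpace ℝ (Fin d) × EuclideanSpace ℝ (Fin d),
      ‖((flipT d ∘ φ) z).1‖ ^ 2 + ‖((flipT d ∘ φ) z).2‖ ^ 2 = ‖z.1‖ ^ 2 + ‖z.2‖ ^ 2 := by
    intro z
    have : ‖((flipT d ∘ φ) z).1‖ ^ 2 + ‖((flipT d ∘ φ) z).2‖ ^ 2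
        = ‖(φ z).1‖ ^ 2 + ‖(φ z).2‖ ^ 2 := by
      simp [flipT, Function.comp_apply]
    rw [this, hnorm z]
  refine ⟨hnorm, ?_, ?_⟩
  · -- Gaussian reversibility
    intro g hg
    have hv : (g⁻¹ : ℝ≥0) ≠ 0 := inv_ne_zero hg.ne'
    have hp : Measure.map (flipT d ∘ φ) ((gaussd d g⁻¹).prod (gaussd d g⁻¹))
        = (gaussd d g⁻¹).prod (gaussd d g⁻¹) := by
      rw [gauss2_eq hv d]
      set ρ2 : EuclideanSpace ℝ (Fin d) × EuclideanSpace ℝ (Fin d) → ℝ≥0∞ :=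
        fun z => ENNReal.ofReal (((Real.sqrt (2 * Real.pi * (g⁻¹ : ℝ≥0)))⁻¹ ^ d) ^ 2
          * Real.exp (-(‖z.1‖ ^ 2 + ‖z.2‖ ^ 2) / (2 * (g⁻¹ : ℝ≥0)))) with hρ2
      have hρinv : ρ2 ∘ (flipT d ∘ φ) = ρ2 := by
        funext z
        simp only [Function.comp_apply, hρ2]
        rw [show ‖(flipT d (φ z)).1‖ ^ 2 + ‖(flipT d (φ z)).2‖ ^ 2
          = ‖z.1‖ ^ 2 + ‖z.2‖ ^ 2 from hsT z]
      set Te : (EuclideanSpace ℝ (Fin d) × EuclideanSpace ℝ (Fin d)) ≃ᵐ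
          (EuclideanSpace ℝ (Fin d) × EuclideanSpace ℝ (Fin d)) :=
        ⟨⟨flipT d ∘ φ, flipT d ∘ φ, hTinvol, hTinvol⟩, hTmeas, hTmeas⟩ with hTe
      calc Measure.map (flipT d ∘ φ)
            (((volume : Measure (EuclideanSpace ℝ (Fin d))).prod volume).withDensity ρ2)
          = Measure.map Te
            (((volume : Measure (EuclideanSpace ℝ (Fin d))).prod volume).withDensity
              (ρ2 ∘ Te)) := by
            rw [show (ρ2 ∘ Te) = ρ2 from hρinv]
            rfl
        _ = (Measure.map Te
              ((volume : Measure (EuclideanSpace ℝ (Fin d))).prod volume)).withDensity ρ2 :=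
            map_withDensity_equiv Te _ ρ2
        _ = ((volume : Measure (EuclideanSpace ℝ (Fin d))).prod volume).withDensity ρ2 := by
            rw [show Measure.map Te ((volume : Measure (EuclideanSpace ℝ (Fin d))).prod volume)
              = _ from hTmp.map_eq]
    exact rev_of_invol hTmeas hTinvol hp
  · -- Lebesgue reversibility
    have hp : Measure.map (flipT d ∘ φ)
        (volume : Measure (EuclideanSpace ℝ (Fin d) × EuclideanSpace ℝ (Fin d)))
        = volume := by
      rw [Measure.volume_eq_prod]
      exact hTmp.map_eq
    exact rev_of_invol hTmeas hTinvol hp
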